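/- The space of finite tight Borel measures on a Hausdorff space X, endowed with the weak-star semi-continuity topology (the smallest topology making μ ↦ ∫ f dμ upper semicontinuous for every bounded upper semicontinuous f : X → ℝ), is a Hausdorff topological space. -/

import Mathlib

open MeasureTheory Topology

/-- The space of finite tight Borel measures on a Hausdorff space. -/
def TightFiniteMeasure (X : Type*) [TopologicalSpace X] [MeasurableSpace X] : Type _ :=
  {μ : Measure X // IsFiniteMeasure μ ∧ μ.InnerRegularWRT IsCompact MeasurableSet}

/-- The weak-star semi-continuity topology: the smallest topology making
`μ ↦ ∫ f dμ` upper semicontinuous for every bounded upper semicontinuous `f`. -/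
def wscTopology (X : Type*) [TopologicalSpace X] [MeasurableSpace X] :
    TopologicalSpace (TightFiniteMeasure X) :=
  TopologicalSpace.generateFrom
    {S | ∃ (f : X → ℝ) (a : ℝ), (∃ C : ℝ, ∀ x, |f x| ≤ C) ∧ UpperSemicontinuous f ∧
      S = {μ : TightFiniteMeasure X | ∫ x, f x ∂μ.1 < a}}

lemma wsc_key {X : Type*} [TopologicalSpace X] [T2Space X] [MeasurableSpace X] [BorelSpace X]
    (μ ν : TightFiniteMeasure X) {K : Set X} (hK : IsCompact K) (hlt : μ.1 K < ν.1 K) :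
    ∃ u v : Set (TightFiniteMeasure X), IsOpen[wscTopology X] u ∧ IsOpen[wscTopology X] v ∧
      μ ∈ u ∧ ν ∈ v ∧ Disjoint u v := by
  haveI := μ.2.1; haveI := ν.2.1
  set δ : ENNReal := (ν.1 K - μ.1 K) / 2 with hδ
  have hδ0 : δ ≠ 0 := by
    simp only [hδ, ne_eq, ENNReal.div_eq_zero_iff, tsub_eq_zero_iff_le, not_or]
    exact ⟨not_le.mpr hlt, by norm_num⟩
  have hδtop : δ ≠ ⊤ := by
    rw [hδ]
    exact (ENNReal.div_lt_top (tsub_le_self.trans_lt (measure_lt_top _ _)).ne (by norm_num)).ne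
  obtain ⟨L, hLsub, hLc, hLlt⟩ :=
    μ.2.2.exists_subset_lt_add isCompact_empty hK.isClosed.measurableSet.compl
      (measure_ne_top _ _) hδ0
  have hdisjKL : Disjoint K L := Set.disjoint_left.mpr fun x hxK hxL => hLsub hxL hxK
  obtain ⟨U, W, hUo, hWo, hKU, hLW, hUW⟩ := SeparatedNhds.of_isCompact_isCompact hK hLc hdisjKL
  have hFc : IsClosed (Wᶜ) := hWo.isClosed_compl
  have hUF : U ⊆ Wᶜ := hUW.subset_compl_right
  -- μ (Wᶜ) < ν K
  have hsplit : μ.1 (Kᶜ \ L) < δ := by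
    have h1 : μ.1 L + μ.1 (Kᶜ \ L) = μ.1 Kᶜ := by
      rw [measure_add_diff hLc.isClosed.measurableSet.nullMeasurableSet,
        Set.union_eq_self_of_subset_left hLsub]
    rw [← h1] at hLlt
    exact (ENNReal.add_lt_add_iff_left (measure_ne_top _ _)).mp hLlt
  have hμF : μ.1 Wᶜ < ν.1 K := by
    have hsub : Wᶜ ⊆ K ∪ (Kᶜ \ L) := by
      intro x hx
      by_cases hxK : x ∈ K
      · exact Or.inl hxK
      · exact Or.inr ⟨hxK, fun hxL => hx (hLW hxL)⟩
    calc μ.1 Wᶜ ≤ μ.1 (K ∪ (Kᶜ \ L)) := measure_mono hsub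
      _ ≤ μ.1 K + μ.1 (Kᶜ \ L) := measure_union_le _ _
      _ < μ.1 K + δ := ENNReal.add_lt_add_left (measure_ne_top _ _) hsplit
      _ < μ.1 K + (δ + δ) :=
        ENNReal.add_lt_add_left (measure_ne_top _ _) (ENNReal.lt_add_right hδtop hδ0)
      _ = μ.1 K + (ν.1 K - μ.1 K) := by rw [hδ, ENNReal.add_halves]
      _ = ν.1 K := add_tsub_cancel_of_le hlt.le
  set a : ℝ := ((μ.1 Wᶜ).toReal + (ν.1 K).toReal) / 2 with ha
  have htoReal : (μ.1 Wᶜ).toReal < (ν.1 K).toReal :=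
    (ENNReal.toReal_lt_toReal (measure_ne_top _ _) (measure_ne_top _ _)).mpr hμF
  have haL : (μ.1 Wᶜ).toReal < a := by rw [ha]; linarith
  have haR : a < (ν.1 K).toReal := by rw [ha]; linarith
  refine ⟨{ρ : TightFiniteMeasure X | ∫ x, (Wᶜ).indicator (fun _ => (1:ℝ)) x ∂ρ.1 < a},
    {ρ : TightFiniteMeasure X | ∫ x, U.indicator (fun _ => (-1:ℝ)) x ∂ρ.1 < -a}, ?_, ?_, ?_, ?_, ?_⟩
  · exact TopologicalSpace.isOpen_generateFrom_of_mem
      ⟨_, a, ⟨1, fun x => by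
        rcases Set.indicator_eq_zero_or_self (Wᶜ) (fun _ => (1:ℝ)) x with h | h <;> rw [h] <;> norm_num⟩,
        hFc.upperSemicontinuous_indicator zero_le_one, rfl⟩
  · exact TopologicalSpace.isOpen_generateFrom_of_mem
      ⟨_, -a, ⟨1, fun x => by
        rcases Set.indicator_eq_zero_or_self U (fun _ => (-1:ℝ)) x with h | h <;> rw [h] <;> norm_num⟩,
        hUo.upperSemicontinuous_indicator (by norm_num), rfl⟩
  · show ∫ x, (Wᶜ).indicator (fun _ => (1:ℝ)) x ∂μ.1 < a
    rw [integral_indicator_const (1:ℝ) hFc.measurableSet]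
    simpa [measureReal_def] using haL
  · show ∫ x, U.indicator (fun _ => (-1:ℝ)) x ∂ν.1 < -a
    rw [integral_indicator_const (-1:ℝ) hUo.measurableSet]
    have : a < (ν.1 U).toReal :=
      haR.trans_le (ENNReal.toReal_mono (measure_ne_top _ _) (measure_mono hKU))
    simp only [smul_eq_mul, mul_neg_one, measureReal_def]
    linarith
  · rw [Set.disjoint_left]
    rintro ρ hρ1 hρ2
    haveI := ρ.2.1
    simp only [Set.mem_setOf_eq, integral_indicator_const (1:ℝ) hFc.measurableSet,
      integral_indicator_const (-1:ℝ) hUo.measurableSet, smul_eq_mul, mul_one, mul_neg_one, measureReal_def] at hρ1 hρ2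
    have : (ρ.1 U).toReal ≤ (ρ.1 Wᶜ).toReal :=
      ENNReal.toReal_mono (measure_ne_top _ _) (measure_mono hUF)
    linarith

theorem stmt2 {X : Type*} [TopologicalSpace X] [T2Space X] [MeasurableSpace X] [BorelSpace X] :
    @T2Space (TightFiniteMeasure X) (wscTopology X) := by
  letI := wscTopology X
  constructor
  intro μ ν hne
  have hex : ∃ K : Set X, IsCompact K ∧ μ.1 K ≠ ν.1 K := by
    by_contra h
    push_neg at h
    apply hne
    refine Subtype.ext (Measure.ext fun s hs => le_antisymm ?_ ?_)
    · refine le_of_forall_lt fun r hr => ?_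
      obtain ⟨L, hLs, hLc, hrL⟩ := μ.2.2 hs r hr
      exact (hrL.trans_eq (h L hLc)).trans_le (measure_mono hLs)
    · refine le_of_forall_lt fun r hr => ?_
      obtain ⟨L, hLs, hLc, hrL⟩ := ν.2.2 hs r hr
      exact (hrL.trans_eq (h L hLc).symm).trans_le (measure_mono hLs)
  obtain ⟨K, hKc, hKne⟩ := hex
  rcases hKne.lt_or_gt with hlt | hlt
  · exact wsc_key μ ν hKc hlt
  · obtain ⟨u, v, hu, hv, hνu, hμv, hd⟩ := wsc_key ν μ hKc hlt
    exact ⟨v, u, hv, hu, hμv, hνu, hd.symm⟩
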